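/- Let ε_∞ > 0, ω_p > 0, ω_0 ≥ 0 be real, λ ∈ (0,1), ε₀ ∈ ℂ, and Λ(ω) := ε₀ − λ(ε₀ − ε_p(ω)) with D(ω) := ω_0² − ω² − i γ ω. Fix δ > 0, Ω_max > 0, constants C₁, C₂, C₃ ≥ 0, h > 0 and a ∈ (0,1]. Suppose: (i) ω_P ∈ (0, Ω_max] satisfies Re(Λ(ω_P)) = 0; (ii) ω ∈ (0, Ω_max]; (iii) |D(ω)| ≥ δ and |D(ω_P)| ≥ δ; (iv) |Im(ε₀)| ≤ C₁ a^h; (v) 0 ≤ γ ≤ C₂ a^h; (vi) |ω² − ω_P²| ≤ C₃ a^h. Then |Λ(ω)| ≤ [ (1−λ) C₁ + λ ε_∞ ω_p² (C₃ + 3 Ω_max C₂) / δ² ] · a^h; that is, for incident frequencies with ω² = ω_P² ± O(a^h) and damping γ = O(a^h), the dispersion function satisfies Λ(ω) = O(a^h). -/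

import Mathlib

/-- The Lorentz permittivity model
`ε_p(ω) = ε_∞ (1 + ω_p² / (ω_0² − ω² − i γ ω))`. -/
noncomputable def epsP (εinf ωp ω0 γ ω : ℝ) : ℂ :=
  (εinf : ℂ) * (1 + (ωp : ℂ) ^ 2 /
    ((ω0 : ℂ) ^ 2 - (ω : ℂ) ^ 2 - Complex.I * (γ : ℂ) * (ω : ℂ)))

/-- The denominator `D(ω) := ω_0² − ω² − i γ ω` of the Lorentz model. -/
noncomputable def lorentzD (ω0 γ ω : ℝ) : ℂ :=
  (ω0 : ℂ) ^ 2 - (ω : ℂ) ^ 2 - Complex.I * (γ : ℂ) * (ω : ℂ)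

/-- The dispersion function `Λ(ω) := ε₀ − λ(ε₀ − ε_p(ω))`. -/
noncomputable def dispΛ (εinf ωp ω0 γ lam : ℝ) (ε0 : ℂ) (ω : ℝ) : ℂ :=
  ε0 - (lam : ℂ) * (ε0 - epsP εinf ωp ω0 γ ω)

/-- For incident frequencies with `ω² = ω_P² ± O(a^h)`, damping `γ = O(a^h)` and
`|Im ε₀| = O(a^h)`, the dispersion function satisfies `Λ(ω) = O(a^h)`, with the explicit
constant `(1−λ)C₁ + λ ε_∞ ω_p² (C₃ + 3 Ω_max C₂)/δ²`. -/
theorem stmt7 (εinf ωp ω0 γ lam : ℝ) (ε0 : ℂ) (δ Ωmax C1 C2 C3 h a ωP ω : ℝ)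
    (hεinf : 0 < εinf) (hωp : 0 < ωp) (hω0 : 0 ≤ ω0)
    (hlam0 : 0 < lam) (hlam1 : lam < 1)
    (hδ : 0 < δ) (hΩ : 0 < Ωmax)
    (hC1 : 0 ≤ C1) (hC2 : 0 ≤ C2) (hC3 : 0 ≤ C3)
    (hh : 0 < h) (ha0 : 0 < a) (ha1 : a ≤ 1)
    (hωP0 : 0 < ωP) (hωPle : ωP ≤ Ωmax)
    (hRe : (dispΛ εinf ωp ω0 γ lam ε0 ωP).re = 0)
    (hω0' : 0 < ω) (hωle : ω ≤ Ωmax)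
    (hDω : δ ≤ ‖lorentzD ω0 γ ω‖)
    (hDωP : δ ≤ ‖lorentzD ω0 γ ωP‖)
    (hIm : |ε0.im| ≤ C1 * a ^ h)
    (hγ0 : 0 ≤ γ) (hγ : γ ≤ C2 * a ^ h)
    (hdiff : |ω ^ 2 - ωP ^ 2| ≤ C3 * a ^ h) :
    ‖dispΛ εinf ωp ω0 γ lam ε0 ω‖
      ≤ ((1 - lam) * C1 + lam * εinf * ωp ^ 2 * (C3 + 3 * Ωmax * C2) / δ ^ 2) * a ^ h := by
  have hah : 0 < a ^ h := Real.rpow_pos_of_pos ha0 h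
  set D := lorentzD ω0 γ ω with hDdef
  set DP := lorentzD ω0 γ ωP with hDPdef
  have hDne : D ≠ 0 := by
    intro h0; rw [h0] at hDω; simp at hDω; linarith
  have hDPne : DP ≠ 0 := by
    intro h0; rw [h0] at hDωP; simp at hDωP; linarith
  have hK : (0:ℝ) ≤ lam * εinf * ωp ^ 2 := by positivity
  have key : dispΛ εinf ωp ω0 γ lam ε0 ω =
      dispΛ εinf ωp ω0 γ lam ε0 ωP +
        ((lam : ℂ) * εinf * ωp ^ 2) * (DP - D) / (D * DP) := by
    have e1 : ((ω0:ℂ)^2 - (ω:ℂ)^2 - Complex.I*(γ:ℂ)*(ω:ℂ)) = D := rfl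
    have e2 : ((ω0:ℂ)^2 - (ωP:ℂ)^2 - Complex.I*(γ:ℂ)*(ωP:ℂ)) = DP := rfl
    simp only [dispΛ, epsP, e1, e2]
    field_simp
    ring
  have hnsDP : δ ^ 2 ≤ Complex.normSq DP := by
    rw [← Complex.sq_norm]
    exact pow_le_pow_left₀ hδ.le hDωP 2
  have hδ2 : (0:ℝ) < δ ^ 2 := by positivity
  -- imaginary part of Λ(ωP)
  have himP : (dispΛ εinf ωp ω0 γ lam ε0 ωP).im
      = (1 - lam) * ε0.im + lam * εinf * ωp ^ 2 * (γ * ωP) / Complex.normSq DP := by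
    simp only [dispΛ, epsP, hDPdef, lorentzD]
    simp [Complex.div_im, Complex.normSq_apply, ← Complex.ofReal_pow]
    ring
  -- |Λ(ωP)| = |Im Λ(ωP)|
  have habsP : ‖dispΛ εinf ωp ω0 γ lam ε0 ωP‖
      = |(dispΛ εinf ωp ω0 γ lam ε0 ωP).im| := by
    rw [Complex.norm_def, Complex.normSq_apply, hRe]
    simpa using Real.sqrt_mul_self_eq_abs _
  -- first bound
  have hB1 : ‖dispΛ εinf ωp ω0 γ lam ε0 ωP‖
      ≤ (1 - lam) * C1 * a ^ h + lam * εinf * ωp ^ 2 * (Ωmax * (C2 * a ^ h)) / δ ^ 2 := by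
    rw [habsP, himP]
    refine (abs_add_le _ _).trans ?_
    gcongr ?_ + ?_
    · rw [abs_mul, abs_of_nonneg (by linarith : (0:ℝ) ≤ 1 - lam)]
      calc (1 - lam) * |ε0.im| ≤ (1 - lam) * (C1 * a ^ h) := by
            apply mul_le_mul_of_nonneg_left hIm (by linarith)
        _ = (1 - lam) * C1 * a ^ h := by ring
    · have h1 : 0 ≤ lam * εinf * ωp ^ 2 * (γ * ωP) := by positivity
      rw [abs_of_nonneg (div_nonneg h1 (hδ2.le.trans hnsDP))]
      apply div_le_div₀ (by positivity) ?_ hδ2 hnsDP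
      apply mul_le_mul_of_nonneg_left ?_ hK
      calc γ * ωP ≤ (C2 * a ^ h) * Ωmax := by
            apply mul_le_mul hγ hωPle hωP0.le (by positivity)
        _ = Ωmax * (C2 * a ^ h) := by ring
  -- bound on |DP - D|
  have hsub : DP - D = ((ω ^ 2 - ωP ^ 2 : ℝ) : ℂ) + Complex.I * ((γ * (ω - ωP) : ℝ) : ℂ) := by
    simp only [hDdef, hDPdef, lorentzD]
    push_cast
    ring
  have hωdiff : |ω - ωP| ≤ Ωmax := abs_le.2 ⟨by linarith, by linarith⟩
  have hDPD : ‖DP - D‖ ≤ (C3 + Ωmax * C2) * a ^ h := by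
    rw [hsub]
    refine (norm_add_le _ _).trans ?_
    rw [Complex.norm_real, Real.norm_eq_abs, norm_mul, Complex.norm_I, one_mul, Complex.norm_real,
      Real.norm_eq_abs, abs_mul, abs_of_nonneg hγ0]
    calc |ω ^ 2 - ωP ^ 2| + γ * |ω - ωP|
        ≤ C3 * a ^ h + (C2 * a ^ h) * Ωmax := by
          refine add_le_add hdiff ?_
          exact mul_le_mul hγ hωdiff (abs_nonneg _) (by positivity)
      _ = (C3 + Ωmax * C2) * a ^ h := by ring
  -- second bound
  have hB2 : ‖((lam:ℂ) * εinf * ωp ^ 2) * (DP - D) / (D * DP)‖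
      ≤ lam * εinf * ωp ^ 2 * ((C3 + Ωmax * C2) * a ^ h) / δ ^ 2 := by
    rw [norm_div, norm_mul, norm_mul, norm_mul, norm_pow, Complex.norm_real, Complex.norm_real,
      Complex.norm_real, norm_mul, Real.norm_eq_abs, Real.norm_eq_abs, Real.norm_eq_abs, abs_of_pos hlam0, abs_of_pos hεinf, abs_of_pos hωp]
    apply div_le_div₀ (by positivity) ?_ hδ2 ?_
    · exact mul_le_mul_of_nonneg_left hDPD hK
    · calc δ ^ 2 = δ * δ := sq δ
        _ ≤ ‖D‖ * ‖DP‖ :=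
          mul_le_mul hDω hDωP hδ.le (norm_nonneg _)
  -- assemble
  calc ‖dispΛ εinf ωp ω0 γ lam ε0 ω‖
      ≤ ‖dispΛ εinf ωp ω0 γ lam ε0 ωP‖
        + ‖((lam:ℂ) * εinf * ωp ^ 2) * (DP - D) / (D * DP)‖ := by
        rw [key]; exact norm_add_le _ _
    _ ≤ ((1 - lam) * C1 * a ^ h + lam * εinf * ωp ^ 2 * (Ωmax * (C2 * a ^ h)) / δ ^ 2)
        + lam * εinf * ωp ^ 2 * ((C3 + Ωmax * C2) * a ^ h) / δ ^ 2 := add_le_add hB1 hB2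
    _ ≤ ((1 - lam) * C1 + lam * εinf * ωp ^ 2 * (C3 + 3 * Ωmax * C2) / δ ^ 2) * a ^ h := by
        have hpos : 0 ≤ lam * εinf * ωp ^ 2 * (Ωmax * C2 * a ^ h) / δ ^ 2 := by positivity
        have heq : ((1 - lam) * C1 + lam * εinf * ωp ^ 2 * (C3 + 3 * Ωmax * C2) / δ ^ 2) * a ^ h
            = ((1 - lam) * C1 * a ^ h + lam * εinf * ωp ^ 2 * (Ωmax * (C2 * a ^ h)) / δ ^ 2
              + lam * εinf * ωp ^ 2 * ((C3 + Ωmax * C2) * a ^ h) / δ ^ 2)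
              + lam * εinf * ωp ^ 2 * (Ωmax * C2 * a ^ h) / δ ^ 2 := by
          field_simp
          ring
        rw [heq]
        linarith
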